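/- Let a and n be positive integers, let w_1, …, w_n be nonzero integers each of absolute value at least a, let λ = #{j : w_j < 0}, let ν(a) = #{j : w_j = a} and ν(−a) = #{j : w_j = −a}, and fix k ∈ {0, …, n}. Consider the Laurent polynomial F = e_k(t^{w_1}, …, t^{w_n}) · ∏_{j : w_j < 0} t^{−w_j} in ℤ[t, t^{−1}]. Then: (1) the coefficient of t^i in F is 0 for every integer i < 0, so F is a polynomial in t; (2) the coefficient of t^0 in F is 1 if λ = k and 0 otherwise; (3) the coefficient of t^i in F is 0 for every i with 0 < i < a; (4) the coefficient of t^a in F equals ν(a) if λ = k − 1, equals 0 if λ = k, equals ν(−a) if λ = k + 1, and equals 0 if |λ − k| ≥ 2. -/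

import Mathlib

open Finset LaurentPolynomial

private lemma prodT_sum {ι : Type*} (s : Finset ι) (f : ι → ℤ) :
    ∏ j ∈ s, (T (f j) : LaurentPolynomial ℤ) = T (∑ j ∈ s, f j) := by
  induction s using Finset.cons_induction with
  | empty => simp
  | cons a s ha ih => rw [Finset.prod_cons, ih, Finset.sum_cons, T_add]

theorem laurent_local_contribution_coeffs
    (a : ℤ) (ha : 0 < a) (n : ℕ) (hn : 0 < n) (w : Fin n → ℤ)
    (hw : ∀ j, w j ≠ 0 ∧ a ≤ |w j|) (k : ℕ) (hk : k ≤ n) :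
    let lam : ℕ := ((univ : Finset (Fin n)).filter fun j => w j < 0).card
    let nua : ℤ := (((univ : Finset (Fin n)).filter fun j => w j = a).card : ℤ)
    let numa : ℤ := (((univ : Finset (Fin n)).filter fun j => w j = -a).card : ℤ)
    let F : LaurentPolynomial ℤ :=
      (∑ S ∈ (univ : Finset (Fin n)).powersetCard k, ∏ j ∈ S, T (w j)) *
        ∏ j ∈ (univ : Finset (Fin n)).filter fun j => w j < 0, T (-(w j))
    ((∀ i : ℤ, i < 0 → F.coeff i = 0) ∧
        ∃ F' : Polynomial ℤ, Polynomial.toLaurent F' = F) ∧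
      (F.coeff 0 = if lam = k then 1 else 0) ∧
      (∀ i : ℤ, 0 < i → i < a → F.coeff i = 0) ∧
      ((lam + 1 = k → F.coeff a = nua) ∧
        (lam = k → F.coeff a = 0) ∧
        (lam = k + 1 → F.coeff a = numa) ∧
        (2 ≤ |(lam : ℤ) - (k : ℤ)| → F.coeff a = 0)) := by
  intro lam nua numa F
  classical
  set Neg : Finset (Fin n) := (univ : Finset (Fin n)).filter fun j => w j < 0 with hNegdef
  set Pos : Finset (Fin n) := (univ : Finset (Fin n)).filter fun j => 0 < w j with hPosdef
  set d : Finset (Fin n) → ℤ := fun S => (∑ j ∈ S, w j) + ∑ j ∈ Neg, -(w j) with hddef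
  have hPosmem : ∀ j, j ∈ Pos ↔ 0 < w j := fun j => by simp [hPosdef]
  have hNegmem : ∀ j, j ∈ Neg ↔ w j < 0 := fun j => by simp [hNegdef]
  have hlamcard : Neg.card = lam := rfl
  have hdisjPN : Disjoint Pos Neg := by
    rw [Finset.disjoint_left]
    intro j hj hj'
    rw [hPosmem] at hj; rw [hNegmem] at hj'; omega
  -- F as a sum of monomials
  have hFrw : F = ∑ S ∈ (univ : Finset (Fin n)).powersetCard k, T (d S) := by
    show (∑ S ∈ (univ : Finset (Fin n)).powersetCard k, ∏ j ∈ S, T (w j)) *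
        ∏ j ∈ Neg, T (-(w j)) = _
    rw [Finset.sum_mul]
    refine Finset.sum_congr rfl fun S _ => ?_
    rw [prodT_sum, prodT_sum, ← T_add, hddef]
  -- coefficients of F count subsets
  have hFcoeff : ∀ i : ℤ, F.coeff i = ((((univ : Finset (Fin n)).powersetCard k).filter
      fun S => d S = i).card : ℤ) := by
    intro i
    rw [hFrw, AddMonoidAlgebra.coeff_sum, Finsupp.finset_sum_apply]
    simp only [T_apply]
    rw [Finset.sum_boole]
  -- decomposition of S into positive and negative parts
  have hunion : ∀ S : Finset (Fin n), (S ∩ Pos) ∪ (S ∩ Neg) = S := by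
    intro S
    ext j
    have hlt := (hw j).1.lt_or_gt
    simp only [Finset.mem_union, Finset.mem_inter, hPosmem, hNegmem]
    tauto
  have hd12 : ∀ S : Finset (Fin n), Disjoint (S ∩ Pos) (S ∩ Neg) := fun S =>
    hdisjPN.mono Finset.inter_subset_right Finset.inter_subset_right
  have hsplit : ∀ S : Finset (Fin n),
      d S = (∑ j ∈ S ∩ Pos, w j) + ∑ j ∈ Neg \ S, -(w j) := by
    intro S
    have h2 : ∑ j ∈ S, w j = (∑ j ∈ S ∩ Pos, w j) + ∑ j ∈ S ∩ Neg, w j := by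
      rw [← Finset.sum_union (hd12 S), hunion]
    have h3 : ∑ j ∈ Neg, -(w j) = (∑ j ∈ Neg ∩ S, -(w j)) + ∑ j ∈ Neg \ S, -(w j) := by
      have hdisj' : Disjoint (Neg ∩ S) (Neg \ S) :=
        Finset.disjoint_sdiff.mono_left Finset.inter_subset_right
      have hNu : Neg ∩ S ∪ Neg \ S = Neg := by
        ext x; simp only [Finset.mem_union, Finset.mem_inter, Finset.mem_sdiff]; tauto
      rw [← Finset.sum_union hdisj', hNu]
    have h4 : Neg ∩ S = S ∩ Neg := Finset.inter_comm _ _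
    rw [h4] at h3
    have h5 : (∑ j ∈ S ∩ Neg, w j) + ∑ j ∈ S ∩ Neg, -(w j) = 0 := by
      rw [← Finset.sum_add_distrib]; simp
    show (∑ j ∈ S, w j) + ∑ j ∈ Neg, -(w j) = _
    rw [h2, h3]
    linarith [h5]
  -- the lower bound
  have hbound : ∀ S : Finset (Fin n),
      a * (((S ∩ Pos).card + (Neg \ S).card : ℕ) : ℤ) ≤ d S := by
    intro S
    rw [hsplit S]
    have b1 : a * ((S ∩ Pos).card : ℤ) ≤ ∑ j ∈ S ∩ Pos, w j := by
      calc a * ((S ∩ Pos).card : ℤ) = (S ∩ Pos).card • a := by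
            rw [nsmul_eq_mul]; ring
        _ ≤ _ := Finset.card_nsmul_le_sum _ _ _ (fun j hj => by
            have hj' := (Finset.mem_inter.1 hj).2
            rw [hPosmem] at hj'
            have h2 := (hw j).2
            rwa [abs_of_pos hj'] at h2)
    have b2 : a * ((Neg \ S).card : ℤ) ≤ ∑ j ∈ Neg \ S, -(w j) := by
      calc a * ((Neg \ S).card : ℤ) = (Neg \ S).card • a := by
            rw [nsmul_eq_mul]; ring
        _ ≤ _ := Finset.card_nsmul_le_sum _ _ _ (fun j hj => by
            have hj' := (Finset.mem_sdiff.1 hj).1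
            rw [hNegmem] at hj'
            have h2 := (hw j).2
            rwa [abs_of_neg hj'] at h2)
    push_cast
    push_cast at b1 b2
    linarith
  have hdnonneg : ∀ S : Finset (Fin n), 0 ≤ d S := by
    intro S
    refine le_trans ?_ (hbound S)
    positivity
  -- cardinal bookkeeping
  have hcards : ∀ S ∈ (univ : Finset (Fin n)).powersetCard k,
      (S ∩ Pos).card + lam = k + (Neg \ S).card := by
    intro S hS
    rw [Finset.mem_powersetCard] at hS
    have h1 : (S ∩ Pos).card + (S ∩ Neg).card = k := by
      rw [← Finset.card_union_of_disjoint (hd12 S), hunion, hS.2]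
    have h2 : (Neg ∩ S).card + (Neg \ S).card = Neg.card :=
      Finset.card_inter_add_card_sdiff _ _
    rw [Finset.inter_comm, hlamcard] at h2
    omega
  -- zero characterization
  have hdvalzero : ∀ S : Finset (Fin n),
      (S ∩ Pos).card + (Neg \ S).card = 0 → d S = 0 := by
    intro S h
    have h1 : S ∩ Pos = ∅ := Finset.card_eq_zero.mp (by omega)
    have h2 : Neg \ S = ∅ := Finset.card_eq_zero.mp (by omega)
    rw [hsplit S, h1, h2]; simp
  have hdzero : ∀ S : Finset (Fin n), d S = 0 → S ∩ Pos = ∅ ∧ Neg \ S = ∅ := by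
    intro S h0
    have hb := hbound S
    rw [h0] at hb
    have hc : (S ∩ Pos).card + (Neg \ S).card = 0 := by
      by_contra hc
      have h1 : (1 : ℤ) ≤ (((S ∩ Pos).card + (Neg \ S).card : ℕ) : ℤ) := by
        push_cast; omega
      nlinarith
    exact ⟨Finset.card_eq_zero.mp (by omega), Finset.card_eq_zero.mp (by omega)⟩
  have hSeqNeg : ∀ S : Finset (Fin n), S ∩ Pos = ∅ → Neg \ S = ∅ → S = Neg := by
    intro S hp hns
    apply Finset.Subset.antisymm
    · intro j hj
      rcases (hw j).1.lt_or_gt with h | h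
      · exact (hNegmem j).2 h
      · exact absurd (Finset.mem_inter.2 ⟨hj, (hPosmem j).2 h⟩) (by simp [hp])
    · intro j hj
      by_contra hjs
      exact absurd (Finset.mem_sdiff.2 ⟨hj, hjs⟩) (by simp [hns])
  have hdNeg : d Neg = 0 := by
    show (∑ j ∈ Neg, w j) + ∑ j ∈ Neg, -(w j) = 0
    rw [← Finset.sum_add_distrib]; simp
  -- d S = a characterization
  have hchar : ∀ S ∈ (univ : Finset (Fin n)).powersetCard k, d S = a →
      ((∃ j, w j = a ∧ S = insert j Neg) ∧ lam + 1 = k) ∨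
      ((∃ j, w j = -a ∧ S = Neg.erase j) ∧ lam = k + 1) := by
    intro S hS hdSa
    have hb := hbound S
    rw [hdSa] at hb
    have hcr := hcards S hS
    have hone : (S ∩ Pos).card + (Neg \ S).card = 1 := by
      by_contra hne
      rcases Nat.lt_or_ge ((S ∩ Pos).card + (Neg \ S).card) 2 with h2 | h2
      · have h0 : (S ∩ Pos).card + (Neg \ S).card = 0 := by omega
        have hz := hdvalzero S h0
        linarith
      · have h2' : (2 : ℤ) ≤ (((S ∩ Pos).card + (Neg \ S).card : ℕ) : ℤ) := by
          push_cast; omega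
        nlinarith
    by_cases hc1 : (S ∩ Pos).card = 1
    · left
      have hc2 : (Neg \ S).card = 0 := by omega
      refine ⟨?_, by omega⟩
      obtain ⟨j, hj⟩ := Finset.card_eq_one.mp hc1
      have hNsub : Neg \ S = ∅ := Finset.card_eq_zero.mp hc2
      have hSNeg : S ∩ Neg = Neg := by
        apply Finset.Subset.antisymm Finset.inter_subset_right
        intro x hx
        refine Finset.mem_inter.2 ⟨?_, hx⟩
        by_contra hxs
        exact absurd (Finset.mem_sdiff.2 ⟨hx, hxs⟩) (by simp [hNsub])
      have hSeq : S = insert j Neg := by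
        have h1 := hunion S
        rw [hj, hSNeg] at h1
        rw [← h1, Finset.insert_eq]
      have hwja : w j = a := by
        have hs := hsplit S
        rw [hj, hNsub] at hs
        simp at hs
        linarith
      exact ⟨j, hwja, hSeq⟩
    · right
      have hc2 : (Neg \ S).card = 1 := by omega
      have hc1' : S ∩ Pos = ∅ := Finset.card_eq_zero.mp (by omega)
      refine ⟨?_, by omega⟩
      obtain ⟨j, hj⟩ := Finset.card_eq_one.mp hc2
      have hjmem : j ∈ Neg \ S := by rw [hj]; exact Finset.mem_singleton_self j
      have hSeq : S = Neg.erase j := by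
        ext x
        simp only [Finset.mem_erase]
        constructor
        · intro hx
          have hxNeg : x ∈ Neg := by
            rcases (hw x).1.lt_or_gt with h | h
            · exact (hNegmem x).2 h
            · exact absurd (Finset.mem_inter.2 ⟨hx, (hPosmem x).2 h⟩) (by simp [hc1'])
          refine ⟨?_, hxNeg⟩
          rintro rfl
          exact (Finset.mem_sdiff.1 hjmem).2 hx
        · rintro ⟨hxj, hxNeg⟩
          by_contra hxs
          have : x ∈ Neg \ S := Finset.mem_sdiff.2 ⟨hxNeg, hxs⟩
          rw [hj, Finset.mem_singleton] at this
          exact hxj this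
      have hwja : w j = -a := by
        have hs := hsplit S
        rw [hj, hc1'] at hs
        simp at hs
        linarith
      exact ⟨j, hwja, hSeq⟩
  have hemptyF : ∀ i : ℤ,
      ((univ : Finset (Fin n)).powersetCard k).filter (fun S => d S = i) = ∅ → F.coeff i = 0 := by
    intro i h
    rw [hFcoeff i, h]; simp
  refine ⟨⟨?_, ?_⟩, ?_, ?_, ?_, ?_, ?_, ?_⟩
  · -- negative coefficients vanish
    intro i hi
    refine hemptyF i (Finset.filter_eq_empty_iff.mpr fun S _ => ?_)
    intro hdS
    have := hdnonneg S
    linarith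
  · -- F comes from a polynomial
    refine ⟨∑ S ∈ (univ : Finset (Fin n)).powersetCard k, Polynomial.X ^ (d S).toNat, ?_⟩
    rw [hFrw, map_sum]
    refine Finset.sum_congr rfl fun S _ => ?_
    rw [Polynomial.toLaurent_X_pow, Int.toNat_of_nonneg (hdnonneg S)]
  · -- constant coefficient
    rw [hFcoeff 0]
    by_cases hlk : lam = k
    · rw [if_pos hlk]
      have hfe : ((univ : Finset (Fin n)).powersetCard k).filter (fun S => d S = 0)
          = {Neg} := by
        ext S
        simp only [Finset.mem_filter, Finset.mem_powersetCard, Finset.mem_singleton]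
        constructor
        · rintro ⟨-, h0⟩
          obtain ⟨hp, hs⟩ := hdzero S h0
          exact hSeqNeg S hp hs
        · rintro rfl
          exact ⟨⟨Finset.subset_univ _, by rw [hlamcard, hlk]⟩, hdNeg⟩
      rw [hfe]; simp
    · rw [if_neg hlk]
      have hfe : ((univ : Finset (Fin n)).powersetCard k).filter (fun S => d S = 0) = ∅ := by
        refine Finset.filter_eq_empty_iff.mpr fun S hS => ?_
        intro h0
        obtain ⟨hp, hs⟩ := hdzero S h0
        have hSN := hSeqNeg S hp hs
        rw [Finset.mem_powersetCard] at hS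
        apply hlk
        rw [← hlamcard, ← hSN]
        exact hS.2
      rw [hfe]; simp
  · -- gap 0 < i < a
    intro i h0 hia
    refine hemptyF i (Finset.filter_eq_empty_iff.mpr fun S _ => ?_)
    intro hdS
    have hb := hbound S
    rw [hdS] at hb
    rcases Nat.eq_zero_or_pos ((S ∩ Pos).card + (Neg \ S).card) with h | h
    · have := hdvalzero S h
      linarith
    · have h1 : (1 : ℤ) ≤ (((S ∩ Pos).card + (Neg \ S).card : ℕ) : ℤ) := by
        push_cast; omega
      nlinarith
  · -- coefficient a, case lam + 1 = k
    intro hlamk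
    rw [hFcoeff a]
    have himg : ((univ : Finset (Fin n)).powersetCard k).filter (fun S => d S = a)
        = ((univ : Finset (Fin n)).filter fun j => w j = a).image fun j => insert j Neg := by
      ext S
      simp only [Finset.mem_filter, Finset.mem_image, Finset.mem_univ, true_and]
      constructor
      · rintro ⟨hS, hdS⟩
        rcases hchar S hS hdS with ⟨⟨j, hja, hSeq⟩, -⟩ | ⟨-, hlk⟩
        · exact ⟨j, hja, hSeq.symm⟩
        · omega
      · rintro ⟨j, hja, rfl⟩
        have hjNeg : j ∉ Neg := by simp only [hNegmem]; omega
        refine ⟨?_, ?_⟩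
        · rw [Finset.mem_powersetCard]
          refine ⟨Finset.subset_univ _, ?_⟩
          rw [Finset.card_insert_of_notMem hjNeg, hlamcard]
          omega
        · show (∑ x ∈ insert j Neg, w x) + ∑ x ∈ Neg, -(w x) = a
          rw [Finset.sum_insert hjNeg]
          have hz : (∑ x ∈ Neg, w x) + ∑ x ∈ Neg, -(w x) = 0 := by
            rw [← Finset.sum_add_distrib]; simp
          linarith
    have hinj : Set.InjOn (fun j => insert j Neg)
        ((univ : Finset (Fin n)).filter fun j => w j = a) := by
      intro j1 h1 j2 h2 heq
      simp only [Finset.coe_filter, Set.mem_setOf_eq, Finset.mem_univ, true_and] at h1 h2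
      have hn1 : j1 ∉ Neg := by simp only [hNegmem]; omega
      have hm : j1 ∈ insert j2 Neg := by
        simp only at heq
        exact heq ▸ Finset.mem_insert_self j1 Neg
      rcases Finset.mem_insert.1 hm with h | h
      · exact h
      · exact absurd h hn1
    rw [himg, Finset.card_image_of_injOn hinj]
  · -- coefficient a, case lam = k
    intro hlk
    refine hemptyF a (Finset.filter_eq_empty_iff.mpr fun S hS => ?_)
    intro hdS
    rcases hchar S hS hdS with ⟨-, h⟩ | ⟨-, h⟩ <;> omega
  · -- coefficient a, case lam = k + 1
    intro hlamk
    rw [hFcoeff a]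
    have himg : ((univ : Finset (Fin n)).powersetCard k).filter (fun S => d S = a)
        = ((univ : Finset (Fin n)).filter fun j => w j = -a).image fun j => Neg.erase j := by
      ext S
      simp only [Finset.mem_filter, Finset.mem_image, Finset.mem_univ, true_and]
      constructor
      · rintro ⟨hS, hdS⟩
        rcases hchar S hS hdS with ⟨-, hlk⟩ | ⟨⟨j, hja, hSeq⟩, -⟩
        · omega
        · exact ⟨j, hja, hSeq.symm⟩
      · rintro ⟨j, hja, rfl⟩
        have hjNeg : j ∈ Neg := by rw [hNegmem]; omega
        refine ⟨?_, ?_⟩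
        · rw [Finset.mem_powersetCard]
          refine ⟨Finset.subset_univ _, ?_⟩
          rw [Finset.card_erase_of_mem hjNeg, hlamcard]
          omega
        · show (∑ x ∈ Neg.erase j, w x) + ∑ x ∈ Neg, -(w x) = a
          have hsum : (∑ x ∈ Neg.erase j, w x) + w j = ∑ x ∈ Neg, w x :=
            Finset.sum_erase_add _ _ hjNeg
          have hz : (∑ x ∈ Neg, w x) + ∑ x ∈ Neg, -(w x) = 0 := by
            rw [← Finset.sum_add_distrib]; simp
          linarith
    have hinj : Set.InjOn (fun j => Neg.erase j)
        ((univ : Finset (Fin n)).filter fun j => w j = -a) := by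
      intro j1 h1 j2 h2 heq
      simp only [Finset.coe_filter, Set.mem_setOf_eq, Finset.mem_univ, true_and] at h1 h2
      simp only at heq
      have hn1 : j1 ∈ Neg := by rw [hNegmem]; omega
      by_contra hne
      have hm : j1 ∈ Neg.erase j2 := Finset.mem_erase.2 ⟨hne, hn1⟩
      rw [← heq] at hm
      exact (Finset.mem_erase.1 hm).1 rfl
    rw [himg, Finset.card_image_of_injOn hinj]
  · -- coefficient a, case |lam - k| ≥ 2
    intro habs
    refine hemptyF a (Finset.filter_eq_empty_iff.mpr fun S hS => ?_)
    intro hdS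
    rcases abs_cases ((lam : ℤ) - (k : ℤ)) with ⟨he, -⟩ | ⟨he, -⟩ <;> rw [he] at habs <;>
      rcases hchar S hS hdS with ⟨-, h⟩ | ⟨-, h⟩ <;> omega
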